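/- In the ℤ₄×ℤ₂ model with Hamiltonian H = -(1/2) Σ_{e=ij} κ_e (ρ₊ + ρ₋ τᵢτⱼ)(ξᵢξⱼ + ηᵢηⱼ) with κ_e ≥ 0, ρ ∈ [0,1], one has ⟨ξ₀ξ_R η₀η_R⟩ ≥ ⟨τ₀τ_R⟩, with equality when ρ = 0. -/
import Mathlib

noncomputable section

/-- Ising spin value of a Boolean configuration entry. -/
def spin (b : Bool) : ℝ := if b then 1 else -1

variable {V E : Type*}

/-- Hamiltonian H = -(1/2) Σ_e κ_e (ρ₊ + ρ₋ τᵢτⱼ)(ξᵢξⱼ + ηᵢηⱼ) of the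
ℤ₄×ℤ₂ model written via two Ising fields ξ, η coupled to τ. -/
def H4 [Fintype E] (s t : E → V) (κ : E → ℝ) (ρ : ℝ) (ξ η τ : V → Bool) : ℝ :=
  -(1 / 2) * ∑ e, κ e * ((1 + ρ) + (1 - ρ) * spin (τ (s e)) * spin (τ (t e)))
      * (spin (ξ (s e)) * spin (ξ (t e)) + spin (η (s e)) * spin (η (t e)))

/-- Gibbs expectation of an observable f(ξ, η, τ) in the ℤ₄×ℤ₂ model. -/
def gibbs4 [Fintype V] [DecidableEq V] [Fintype E]
    (s t : E → V) (κ : E → ℝ) (ρ β : ℝ)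
    (f : (V → Bool) → (V → Bool) → (V → Bool) → ℝ) : ℝ :=
  (∑ c : (V → Bool) × (V → Bool) × (V → Bool),
      f c.1 c.2.1 c.2.2 * Real.exp (-(β * H4 s t κ ρ c.1 c.2.1 c.2.2)))
    / ∑ c : (V → Bool) × (V → Bool) × (V → Bool),
        Real.exp (-(β * H4 s t κ ρ c.1 c.2.1 c.2.2))

/- ### Auxiliary lemmas -/

lemma spin_beq (x y : Bool) : spin (x == y) = spin x * spin y := by
  cases x <;> cases y <;> norm_num [spin]

lemma spin_mul_self (x : Bool) : spin x * spin x = 1 := by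
  cases x <;> norm_num [spin]

lemma spin_mul_le_one (x y : Bool) : spin x * spin y ≤ 1 := by
  cases x <;> cases y <;> norm_num [spin]

/-- Conditional single-field coupling sum: -βH splits as `Sk τ ξ + Sk τ η`. -/
def Sk [Fintype E] (s t : E → V) (κ : E → ℝ) (ρ β : ℝ) (τ f : V → Bool) : ℝ :=
  ∑ e, (β * (1 / 2) * (κ e * ((1 + ρ) + (1 - ρ) * spin (τ (s e)) * spin (τ (t e)))))
      * (spin (f (s e)) * spin (f (t e)))

lemma H_split [Fintype E] (s t : E → V) (κ : E → ℝ) (ρ β : ℝ) (ξ η τ : V → Bool) :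
    -(β * H4 s t κ ρ ξ η τ) = Sk s t κ ρ β τ ξ + Sk s t κ ρ β τ η := by
  unfold H4 Sk
  rw [← Finset.sum_add_distrib, Finset.mul_sum, Finset.mul_sum, ← Finset.sum_neg_distrib]
  exact Finset.sum_congr rfl fun e _ => by ring

/-- Triple-sum factorization over the two Ising fields, conditionally on τ. -/
lemma triple_factor [Fintype V] [DecidableEq V] [Fintype E]
    (s t : E → V) (κ : E → ℝ) (ρ β : ℝ) (w p q : (V → Bool) → ℝ) :
    ∑ c : (V → Bool) × (V → Bool) × (V → Bool),
        w c.2.2 * (p c.1 * q c.2.1) * Real.exp (-(β * H4 s t κ ρ c.1 c.2.1 c.2.2))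
      = ∑ τ : V → Bool, w τ *
          ((∑ ξ : V → Bool, p ξ * Real.exp (Sk s t κ ρ β τ ξ)) *
           (∑ η : V → Bool, q η * Real.exp (Sk s t κ ρ β τ η))) := by
  calc
    ∑ c : (V → Bool) × (V → Bool) × (V → Bool),
        w c.2.2 * (p c.1 * q c.2.1) * Real.exp (-(β * H4 s t κ ρ c.1 c.2.1 c.2.2))
      = ∑ ξ : V → Bool, ∑ η : V → Bool, ∑ τ : V → Bool,
          w τ * (p ξ * q η) * Real.exp (-(β * H4 s t κ ρ ξ η τ)) := by
        rw [Fintype.sum_prod_type]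
        exact Finset.sum_congr rfl fun ξ _ => Fintype.sum_prod_type _
    _ = ∑ ξ : V → Bool, ∑ τ : V → Bool, ∑ η : V → Bool,
          w τ * (p ξ * q η) * Real.exp (-(β * H4 s t κ ρ ξ η τ)) :=
        Finset.sum_congr rfl fun ξ _ => Finset.sum_comm
    _ = ∑ τ : V → Bool, ∑ ξ : V → Bool, ∑ η : V → Bool,
          w τ * (p ξ * q η) * Real.exp (-(β * H4 s t κ ρ ξ η τ)) := Finset.sum_comm
    _ = ∑ τ : V → Bool, w τ *
          ((∑ ξ : V → Bool, p ξ * Real.exp (Sk s t κ ρ β τ ξ)) *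
           (∑ η : V → Bool, q η * Real.exp (Sk s t κ ρ β τ η))) := by
        refine Finset.sum_congr rfl fun τ _ => ?_
        rw [Finset.sum_mul_sum, Finset.mul_sum]
        refine Finset.sum_congr rfl fun ξ _ => ?_
        rw [Finset.mul_sum]
        refine Finset.sum_congr rfl fun η _ => ?_
        rw [H_split, Real.exp_add]
        ring

/-- Invariance of the Hamiltonian under τ ↦ τξη. -/
lemma H_phi [Fintype E] (s t : E → V) (κ : E → ℝ) (ρ : ℝ) (ξ η τ : V → Bool) :
    H4 s t κ ρ ξ η (fun v => τ v == (ξ v == η v)) = H4 s t κ ρ ξ η τ := by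
  unfold H4
  congr 1
  refine Finset.sum_congr rfl fun e _ => ?_
  cases hx : ξ (s e) <;> cases hx' : ξ (t e) <;> cases hy : η (s e) <;> cases hy' : η (t e) <;>
    cases hu : τ (s e) <;> cases hu' : τ (t e) <;>
      simp only [hx, hx', hy, hy', hu, hu', spin] <;> norm_num

/-- Invariance of the ρ = 0 Hamiltonian under the swap τ ↔ ξη. -/
lemma H_swap [Fintype E] (s t : E → V) (κ : E → ℝ) (ξ η τ : V → Bool) :
    H4 s t κ 0 ξ (fun v => ξ v == τ v) (fun v => ξ v == η v) = H4 s t κ 0 ξ η τ := by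
  unfold H4
  congr 1
  refine Finset.sum_congr rfl fun e _ => ?_
  cases hx : ξ (s e) <;> cases hx' : ξ (t e) <;> cases hy : η (s e) <;> cases hy' : η (t e) <;>
    cases hu : τ (s e) <;> cases hu' : τ (t e) <;>
      simp only [hx, hx', hy, hy', hu, hu', spin] <;> norm_num

/-- ⟨ξ₀ξ_R η₀η_R⟩ ≥ ⟨τ₀τ_R⟩, with equality when ρ = 0. -/
theorem stmt18 [Fintype V] [DecidableEq V] [Fintype E]
    (s t : E → V) (κ : E → ℝ) (hκ : ∀ e, 0 ≤ κ e)
    (ρ β : ℝ) (hρ0 : 0 ≤ ρ) (hρ1 : ρ ≤ 1) (hβ : 0 ≤ β) (a b : V) :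
    gibbs4 s t κ ρ β (fun ξ η _τ => (spin (ξ a) * spin (ξ b)) * (spin (η a) * spin (η b)))
      ≥ gibbs4 s t κ ρ β (fun _ξ _η τ => spin (τ a) * spin (τ b)) ∧
    (ρ = 0 →
      gibbs4 s t κ ρ β (fun ξ η _τ => (spin (ξ a) * spin (ξ b)) * (spin (η a) * spin (η b)))
        = gibbs4 s t κ ρ β (fun _ξ _η τ => spin (τ a) * spin (τ b))) := by
  -- numerator identities
  have hN1 : (∑ c : (V → Bool) × (V → Bool) × (V → Bool),
        ((spin (c.1 a) * spin (c.1 b)) * (spin (c.2.1 a) * spin (c.2.1 b)))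
          * Real.exp (-(β * H4 s t κ ρ c.1 c.2.1 c.2.2)))
      = ∑ τ : V → Bool,
          (1 : ℝ) * ((∑ ξ : V → Bool, (spin (ξ a) * spin (ξ b)) * Real.exp (Sk s t κ ρ β τ ξ)) *
           (∑ η : V → Bool, (spin (η a) * spin (η b)) * Real.exp (Sk s t κ ρ β τ η))) := by
    rw [← triple_factor s t κ ρ β (fun _ => (1 : ℝ))
        (fun ξ => spin (ξ a) * spin (ξ b)) (fun ξ => spin (ξ a) * spin (ξ b))]
    exact Finset.sum_congr rfl fun c _ => by ring
  have hN2 : (∑ c : (V → Bool) × (V → Bool) × (V → Bool),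
        (spin (c.2.2 a) * spin (c.2.2 b))
          * Real.exp (-(β * H4 s t κ ρ c.1 c.2.1 c.2.2)))
      = ∑ τ : V → Bool,
          (spin (τ a) * spin (τ b)) *
          ((∑ ξ : V → Bool, (spin (ξ a) * spin (ξ b)) * Real.exp (Sk s t κ ρ β τ ξ)) *
           (∑ η : V → Bool, (spin (η a) * spin (η b)) * Real.exp (Sk s t κ ρ β τ η))) := by
    rw [← triple_factor s t κ ρ β (fun τ => spin (τ a) * spin (τ b))
        (fun ξ => spin (ξ a) * spin (ξ b)) (fun ξ => spin (ξ a) * spin (ξ b))]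
    -- reindex by the involution τ ↦ τξη
    have hinv : Function.Involutive
        (fun c : (V → Bool) × (V → Bool) × (V → Bool) =>
          (c.1, c.2.1, fun v => c.2.2 v == (c.1 v == c.2.1 v))) := by
      rintro ⟨ξ, η, τ⟩
      refine Prod.ext rfl (Prod.ext rfl ?_)
      funext v
      show ((τ v == (ξ v == η v)) == (ξ v == η v)) = τ v
      cases τ v <;> cases ξ v <;> cases η v <;> rfl
    refine Fintype.sum_bijective _ hinv.bijective _ _ fun c => ?_
    obtain ⟨ξ, η, τ⟩ := c
    show spin (τ a) * spin (τ b) * Real.exp (-(β * H4 s t κ ρ ξ η τ))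
      = spin (τ a == (ξ a == η a)) * spin (τ b == (ξ b == η b))
          * (spin (ξ a) * spin (ξ b) * (spin (η a) * spin (η b)))
          * Real.exp (-(β * H4 s t κ ρ ξ η (fun v => τ v == (ξ v == η v))))
    rw [H_phi]
    simp only [spin_beq]
    have h1 := spin_mul_self (ξ a)
    have h2 := spin_mul_self (ξ b)
    have h3 := spin_mul_self (η a)
    have h4 := spin_mul_self (η b)
    set ex := Real.exp (-(β * H4 s t κ ρ ξ η τ))
    linear_combination (-(spin (τ a) * spin (τ b) * ex * (spin (ξ b) * spin (ξ b)) *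
        (spin (η a) * spin (η a)) * (spin (η b) * spin (η b)))) * h1
      + (-(spin (τ a) * spin (τ b) * ex * (spin (η a) * spin (η a)) *
        (spin (η b) * spin (η b)))) * h2
      + (-(spin (τ a) * spin (τ b) * ex * (spin (η b) * spin (η b)))) * h3
      + (-(spin (τ a) * spin (τ b) * ex)) * h4
  have hZ : (0 : ℝ) < ∑ c : (V → Bool) × (V → Bool) × (V → Bool),
      Real.exp (-(β * H4 s t κ ρ c.1 c.2.1 c.2.2)) :=
    Finset.sum_pos (fun c _ => Real.exp_pos _) Finset.univ_nonempty
  constructor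
  · unfold gibbs4
    rw [ge_iff_le, ← sub_nonneg, ← sub_div]
    refine div_nonneg ?_ hZ.le
    rw [hN1, hN2, ← Finset.sum_sub_distrib]
    refine Finset.sum_nonneg fun τ _ => ?_
    have key : (1 : ℝ) * ((∑ ξ : V → Bool, (spin (ξ a) * spin (ξ b)) * Real.exp (Sk s t κ ρ β τ ξ)) *
           (∑ η : V → Bool, (spin (η a) * spin (η b)) * Real.exp (Sk s t κ ρ β τ η)))
        - (spin (τ a) * spin (τ b)) *
          ((∑ ξ : V → Bool, (spin (ξ a) * spin (ξ b)) * Real.exp (Sk s t κ ρ β τ ξ)) *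
           (∑ η : V → Bool, (spin (η a) * spin (η b)) * Real.exp (Sk s t κ ρ β τ η)))
        = (1 - spin (τ a) * spin (τ b)) *
          ((∑ ξ : V → Bool, (spin (ξ a) * spin (ξ b)) * Real.exp (Sk s t κ ρ β τ ξ)) *
           (∑ ξ : V → Bool, (spin (ξ a) * spin (ξ b)) * Real.exp (Sk s t κ ρ β τ ξ))) := by ring
    rw [key]
    exact mul_nonneg (by linarith [spin_mul_le_one (τ a) (τ b)]) (mul_self_nonneg _)
  · rintro rfl
    unfold gibbs4
    congr 1
    have hinv : Function.Involutive
        (fun c : (V → Bool) × (V → Bool) × (V → Bool) =>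
          (c.1, fun v => c.1 v == c.2.2 v, fun v => c.1 v == c.2.1 v)) := by
      rintro ⟨ξ, η, τ⟩
      refine Prod.ext rfl (Prod.ext ?_ ?_)
      · funext v
        show (ξ v == (ξ v == η v)) = η v
        cases ξ v <;> cases η v <;> rfl
      · funext v
        show (ξ v == (ξ v == τ v)) = τ v
        cases ξ v <;> cases τ v <;> rfl
    refine Fintype.sum_bijective _ hinv.bijective _ _ fun c => ?_
    obtain ⟨ξ, η, τ⟩ := c
    show (spin (ξ a) * spin (ξ b)) * (spin (η a) * spin (η b))
          * Real.exp (-(β * H4 s t κ 0 ξ η τ))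
      = spin (ξ a == η a) * spin (ξ b == η b)
          * Real.exp (-(β * H4 s t κ 0 ξ (fun v => ξ v == τ v) (fun v => ξ v == η v)))
    rw [H_swap, spin_beq, spin_beq]
    ring
end
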